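/- Both Sinkhorn divergences converge to the Wasserstein cost as the regularization parameter tends to infinity: for minimizers π^s_λ of F_λ over strictly positive couplings (for each λ > 0), one has |s̃_λ - W| ≤ (log n + log ñ)/λ and |W - s_λ| ≤ (log n + log ñ)/λ, hence s̃_λ → W and s_λ → W as λ → ∞. -/

import Mathlib

open Finset

/-- Entropy of a matrix (convention `0 * log 0 = 0` holds since `Real.log 0 = 0`). -/
noncomputable def entM {n m : ℕ} (π : Fin n → Fin m → ℝ) : ℝ :=
  -∑ i, ∑ j, π i j * Real.log (π i j)

/-- A coupling of `(p, pt)`: nonnegative entries, row sums `p`, column sums `pt`. -/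
def IsCoupling {n m : ℕ} (p : Fin n → ℝ) (pt : Fin m → ℝ) (π : Fin n → Fin m → ℝ) : Prop :=
  (∀ i j, 0 ≤ π i j) ∧ (∀ i, ∑ j, π i j = p i) ∧ (∀ j, ∑ i, π i j = pt j)

/-- Transport cost of a plan. -/
noncomputable def cost {n m : ℕ} (c π : Fin n → Fin m → ℝ) : ℝ :=
  ∑ i, ∑ j, π i j * c i j

/-- The Sinkhorn (entropy-regularized) objective. -/
noncomputable def Fobj {n m : ℕ} (lam : ℝ) (c π : Fin n → Fin m → ℝ) : ℝ :=
  cost c π - (1 / lam) * entM π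

lemma entM_nonneg {n m : ℕ} (π : Fin n → Fin m → ℝ)
    (h0 : ∀ i j, 0 ≤ π i j) (h1 : ∀ i j, π i j ≤ 1) : 0 ≤ entM π := by
  unfold entM
  rw [neg_nonneg]
  apply Finset.sum_nonpos
  intro i _
  apply Finset.sum_nonpos
  intro j _
  exact mul_nonpos_of_nonneg_of_nonpos (h0 i j) (Real.log_nonpos (h0 i j) (h1 i j))

lemma neg_mul_log_le (N q : ℝ) (hN : 0 < N) (hq : 0 ≤ q) :
    -(q * Real.log q) ≤ q * Real.log N + (1 / N - q) := by
  rcases eq_or_lt_of_le hq with h | h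
  · simp [← h]
    positivity
  · have hlog := Real.log_le_sub_one_of_pos (show 0 < 1 / (q * N) by positivity)
    rw [one_div, Real.log_inv, Real.log_mul (ne_of_gt h) (ne_of_gt hN)] at hlog
    have h2 : q * (-(Real.log q + Real.log N)) ≤ q * ((q * N)⁻¹ - 1) :=
      mul_le_mul_of_nonneg_left hlog hq
    have h3 : q * ((q * N)⁻¹ - 1) = 1 / N - q := by
      field_simp
    have h4 : q * (-(Real.log q + Real.log N)) = -(q * Real.log q) - q * Real.log N := by ring
    linarith
  
lemma entM_le {n m : ℕ} (hn : 1 ≤ n) (hm : 1 ≤ m) (π : Fin n → Fin m → ℝ)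
    (h0 : ∀ i j, 0 ≤ π i j) (hsum : ∑ i, ∑ j, π i j = 1) :
    entM π ≤ Real.log n + Real.log m := by
  set N : ℝ := (n : ℝ) * m with hNdef
  have hn0 : (0 : ℝ) < n := by exact_mod_cast Nat.lt_of_lt_of_le Nat.zero_lt_one hn
  have hm0 : (0 : ℝ) < m := by exact_mod_cast Nat.lt_of_lt_of_le Nat.zero_lt_one hm
  have hN0 : 0 < N := mul_pos hn0 hm0
  have key : ∀ i ∈ Finset.univ, ∀ j ∈ (Finset.univ : Finset (Fin m)),
      -(π i j * Real.log (π i j)) ≤ π i j * Real.log N + (1 / N - π i j) :=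
    fun i _ j _ => neg_mul_log_le N (π i j) hN0 (h0 i j)
  have hsum2 : entM π ≤ ∑ i, ∑ j, (π i j * Real.log N + (1 / N - π i j)) := by
    unfold entM
    rw [← Finset.sum_neg_distrib]
    simp_rw [← Finset.sum_neg_distrib]
    exact Finset.sum_le_sum fun i hi => Finset.sum_le_sum (key i hi)
  have hrhs : ∑ i, ∑ j, (π i j * Real.log N + (1 / N - π i j)) = Real.log N := by
    simp_rw [Finset.sum_add_distrib, Finset.sum_sub_distrib, ← Finset.sum_mul]
    rw [hsum]
    simp only [Finset.sum_const, Finset.card_univ, Fintype.card_fin, nsmul_eq_mul, one_mul,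
      hNdef]
    field_simp
    ring
  have hlogN : Real.log N = Real.log n + Real.log m :=
    Real.log_mul (ne_of_gt hn0) (ne_of_gt hm0)
  linarith [hsum2, hrhs.le]

/-- Both Sinkhorn divergences converge to the Wasserstein cost as `λ → ∞`, with rate
`(log n + log ñ)/λ`. -/
theorem sinkhorn_tendsto_wasserstein {n m : ℕ} (hn : 1 ≤ n) (hm : 1 ≤ m)
    (p : Fin n → ℝ) (pt : Fin m → ℝ)
    (hp0 : ∀ i, 0 ≤ p i) (hpt0 : ∀ j, 0 ≤ pt j)
    (hp1 : ∑ i, p i = 1) (hpt1 : ∑ j, pt j = 1)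
    (c : Fin n → Fin m → ℝ) (hc : ∀ i j, 0 ≤ c i j)
    (πW : Fin n → Fin m → ℝ)
    (hπW : IsCoupling p pt πW)
    (hπWmin : ∀ π, IsCoupling p pt π → cost c πW ≤ cost c π)
    (πs : ℝ → Fin n → Fin m → ℝ)
    (hπs : ∀ lam > (0 : ℝ), IsCoupling p pt (πs lam) ∧ (∀ i j, 0 < πs lam i j) ∧
      ∀ π, IsCoupling p pt π → (∀ i j, 0 < π i j) →
        Fobj lam c (πs lam) ≤ Fobj lam c π) :
    (∀ lam > (0 : ℝ),
        |cost c (πs lam) - cost c πW| ≤ (Real.log n + Real.log m) / lam ∧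
        |cost c πW - Fobj lam c (πs lam)| ≤ (Real.log n + Real.log m) / lam) ∧
      Filter.Tendsto (fun lam => cost c (πs lam)) Filter.atTop (nhds (cost c πW)) ∧
      Filter.Tendsto (fun lam => Fobj lam c (πs lam)) Filter.atTop (nhds (cost c πW)) := by
  have hn0 : (0 : ℝ) < n := by exact_mod_cast Nat.lt_of_lt_of_le Nat.zero_lt_one hn
  have hm0 : (0 : ℝ) < m := by exact_mod_cast Nat.lt_of_lt_of_le Nat.zero_lt_one hm
  set L : ℝ := Real.log n + Real.log m with hLdef
  have hL0 : 0 ≤ L := by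
    have := Real.log_nonneg (show (1:ℝ) ≤ n by exact_mod_cast hn)
    have := Real.log_nonneg (show (1:ℝ) ≤ m by exact_mod_cast hm)
    linarith
  haveI : Nonempty (Fin n) := ⟨⟨0, hn⟩⟩
  haveI : Nonempty (Fin m) := ⟨⟨0, hm⟩⟩
  -- all marginals are strictly positive, since a strictly positive coupling exists
  obtain ⟨h1c, h1pos, -⟩ := hπs 1 one_pos
  have hppos : ∀ i, 0 < p i := fun i => by
    rw [← h1c.2.1 i]
    exact Finset.sum_pos (fun j _ => h1pos i j) Finset.univ_nonempty
  have hptpos : ∀ j, 0 < pt j := fun j => by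
    rw [← h1c.2.2 j]
    exact Finset.sum_pos (fun i _ => h1pos i j) Finset.univ_nonempty
  -- the product coupling
  set Q : Fin n → Fin m → ℝ := fun i j => p i * pt j with hQdef
  -- generic facts about couplings
  have hle_one : ∀ π : Fin n → Fin m → ℝ, IsCoupling p pt π → ∀ i j, π i j ≤ 1 := by
    intro π hπ i j
    have h1 : π i j ≤ ∑ j', π i j' :=
      Finset.single_le_sum (fun j' _ => hπ.1 i j') (Finset.mem_univ j)
    have h2 : p i ≤ ∑ i', p i' :=
      Finset.single_le_sum (fun i' _ => hp0 i') (Finset.mem_univ i)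
    rw [hπ.2.1 i] at h1
    linarith [hp1 ▸ h2]
  have hsum_one : ∀ π : Fin n → Fin m → ℝ, IsCoupling p pt π → ∑ i, ∑ j, π i j = 1 := by
    intro π hπ
    simp_rw [hπ.2.1]
    exact hp1
  have hent0 : ∀ π : Fin n → Fin m → ℝ, IsCoupling p pt π → 0 ≤ entM π :=
    fun π hπ => entM_nonneg π hπ.1 (hle_one π hπ)
  have hentL : ∀ π : Fin n → Fin m → ℝ, IsCoupling p pt π → entM π ≤ L :=
    fun π hπ => entM_le hn hm π hπ.1 (hsum_one π hπ)
  -- the key inequality: the Sinkhorn minimum is at most the value at πW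
  have hkey : ∀ lam > (0 : ℝ), Fobj lam c (πs lam) ≤ Fobj lam c πW := by
    intro lam hlam
    obtain ⟨hsc, hspos, hsmin⟩ := hπs lam hlam
    set g : ℝ → ℝ := fun ε => Fobj lam c (fun i j => (1 - ε) * πW i j + ε * Q i j) with hgdef
    have hg0 : g 0 = Fobj lam c πW := by
      simp [hgdef, Fobj, cost, entM]
    have hcont : Continuous g := by
      apply Continuous.sub
      · unfold cost
        exact continuous_finset_sum _ fun i _ => continuous_finset_sum _ fun j _ => by
          fun_prop
      · apply Continuous.mul continuous_const
        unfold entM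
        apply Continuous.neg
        exact continuous_finset_sum _ fun i _ => continuous_finset_sum _ fun j _ =>
          Real.continuous_mul_log.comp (by fun_prop)
    have hbound : ∀ᶠ ε in nhdsWithin 0 (Set.Ioi 0), Fobj lam c (πs lam) ≤ g ε := by
      filter_upwards [Ioo_mem_nhdsGT_of_mem (Set.mem_Ico.2 ⟨le_refl (0:ℝ), one_pos⟩)]
        with ε hε
      obtain ⟨hε0, hε1⟩ := hε
      have hεcoupling : IsCoupling p pt (fun i j => (1 - ε) * πW i j + ε * Q i j) := by
        refine ⟨fun i j => ?_, fun i => ?_, fun j => ?_⟩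
        · exact add_nonneg (mul_nonneg (by linarith) (hπW.1 i j))
            (mul_nonneg hε0.le (le_of_lt (mul_pos (hppos i) (hptpos j))))
        · rw [Finset.sum_add_distrib, ← Finset.mul_sum, ← Finset.mul_sum, hπW.2.1 i]
          have : ∑ j, Q i j = p i := by
            rw [hQdef, ← Finset.mul_sum, hpt1, mul_one]
          rw [this]; ring
        · rw [Finset.sum_add_distrib, ← Finset.mul_sum, ← Finset.mul_sum, hπW.2.2 j]
          have : ∑ i, Q i j = pt j := by
            simp only [hQdef]
            rw [← Finset.sum_mul, hp1, one_mul]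
          rw [this]; ring
      have hεpos : ∀ i j, 0 < (1 - ε) * πW i j + ε * Q i j := fun i j => by
        have h1 : 0 ≤ (1 - ε) * πW i j :=
          mul_nonneg (by linarith) (hπW.1 i j)
        have h2 : 0 < ε * Q i j := mul_pos hε0 (mul_pos (hppos i) (hptpos j))
        linarith
      exact hsmin _ hεcoupling hεpos
    have htend : Filter.Tendsto g (nhdsWithin 0 (Set.Ioi 0)) (nhds (Fobj lam c πW)) := by
      rw [← hg0]
      exact (hcont.tendsto 0).mono_left nhdsWithin_le_nhds
    exact ge_of_tendsto htend hbound
  -- the quantitative bounds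
  have hmain : ∀ lam > (0 : ℝ),
      |cost c (πs lam) - cost c πW| ≤ L / lam ∧
      |cost c πW - Fobj lam c (πs lam)| ≤ L / lam := by
    intro lam hlam
    obtain ⟨hsc, hspos, -⟩ := hπs lam hlam
    have hWle : cost c πW ≤ cost c (πs lam) := hπWmin _ hsc
    have hF := hkey lam hlam
    have hHs0 : 0 ≤ entM (πs lam) := hent0 _ hsc
    have hHsL : entM (πs lam) ≤ L := hentL _ hsc
    have hHW0 : 0 ≤ entM πW := hent0 _ hπW
    have hHWL : entM πW ≤ L := hentL _ hπW
    have hlaminv : 0 < 1 / lam := by positivity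
    unfold Fobj at hF ⊢
    have hLlam : L / lam = (1 / lam) * L := by ring
    constructor
    · rw [abs_le]
      constructor
      · have : 0 ≤ L / lam := div_nonneg hL0 hlam.le
        linarith
      · rw [hLlam]
        nlinarith [mul_le_mul_of_nonneg_left hHsL hlaminv.le,
          mul_nonneg hlaminv.le hHW0]
    · rw [abs_le]
      constructor
      · have : 0 ≤ (1 / lam) * entM πW := mul_nonneg hlaminv.le hHW0
        have h0L : 0 ≤ L / lam := div_nonneg hL0 hlam.le
        linarith
      · rw [hLlam]
        nlinarith [mul_le_mul_of_nonneg_left hHsL hlaminv.le]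
  refine ⟨hmain, ?_, ?_⟩ <;>
  · rw [tendsto_iff_dist_tendsto_zero]
    apply squeeze_zero' (g := fun lam => L / lam)
    · filter_upwards with lam using dist_nonneg
    · filter_upwards [Filter.eventually_gt_atTop 0] with lam hlam
      rw [Real.dist_eq]
      first
      | exact (hmain lam hlam).1
      | · rw [abs_sub_comm]
          exact (hmain lam hlam).2
    · exact Filter.Tendsto.div_atTop tendsto_const_nhds Filter.tendsto_id
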